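/- Let n ≥ 1 and let d_0, …, d_{n−1} be integers with d_i ≥ 2 for all i and d_j ≥ 3 for some j. Then the monodromy matrix σ(d) = [[0,−1],[1,d_{n−1}]] · [[0,−1],[1,d_{n−2}]] ⋯ [[0,−1],[1,d_0]] lies in SL₂(ℤ) and has trace strictly greater than 2 (i.e., σ(d) is a hyperbolic element of SL₂(ℤ)). -/

import Mathlib

/-- The monodromy matrix `σ(d) = [[0,−1],[1,d_{n−1}]] ⋯ [[0,−1],[1,d₀]]` of a cycle
`(d₀, …, d_{n−1})`. -/
def monodromy (n : ℕ) (d : ℕ → ℤ) : Matrix (Fin 2) (Fin 2) ℤ :=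
  (List.range n).foldl (fun A i => !![0, -1; 1, d i] * A) 1

lemma monodromy_succ (n : ℕ) (d : ℕ → ℤ) :
    monodromy (n + 1) d = !![0, -1; 1, d n] * monodromy n d := by
  simp [monodromy, List.range_succ]

lemma monodromy_one (d : ℕ → ℤ) : monodromy 1 d = !![0, -1; 1, d 0] := by
  simp [monodromy, List.range_succ]

lemma mul_entries (dd : ℤ) (M : Matrix (Fin 2) (Fin 2) ℤ) :
    !![0, -1; 1, dd] * M =
      !![-(M 1 0), -(M 1 1); M 0 0 + dd * M 1 0, M 0 1 + dd * M 1 1] := by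
  ext i j
  fin_cases i <;> fin_cases j <;>
    simp [Matrix.mul_apply, Fin.sum_univ_two]

/-- The invariant maintained along the product. -/
def MonInv (M : Matrix (Fin 2) (Fin 2) ℤ) : Prop :=
  1 ≤ M 1 0 ∧ M 1 0 + 1 ≤ M 1 1 ∧ 0 ≤ M 0 0 + M 1 0 ∧ 0 ≤ M 0 1 + M 1 1 ∧
    M 0 0 - M 0 1 ≤ M 1 1 - M 1 0

theorem monodromy_mem_SL2_and_trace_gt_two
    (n : ℕ) (hn : 1 ≤ n) (d : ℕ → ℤ)
    (h2 : ∀ i, i < n → 2 ≤ d i) (h3 : ∃ j, j < n ∧ 3 ≤ d j) :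
    (monodromy n d).det = 1 ∧ 2 < Matrix.trace (monodromy n d) := by
  have key : ∀ m : ℕ, 1 ≤ m → (∀ i, i < m → 2 ≤ d i) →
      MonInv (monodromy m d) ∧ (monodromy m d).det = 1 ∧
        ((∃ j, j < m ∧ 3 ≤ d j) → 2 < Matrix.trace (monodromy m d)) := by
    intro m hm
    induction m, hm using Nat.le_induction with
    | base =>
      intro h2'
      have hd0 : 2 ≤ d 0 := h2' 0 one_pos
      rw [monodromy_one]
      refine ⟨⟨by norm_num, by simp; omega, by norm_num, by simp; omega,
        by simp; omega⟩, by simp [Matrix.det_fin_two_of], ?_⟩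
      rintro ⟨j, hj, hj3⟩
      interval_cases j
      rw [Matrix.trace_fin_two_of]
      omega
    | succ k hk ih =>
      intro h2'
      have h2k : ∀ i, i < k → 2 ≤ d i := fun i hi => h2' i (hi.trans (Nat.lt_succ_self k))
      obtain ⟨⟨hc, hec, hac, hbe, habce⟩, hdet, htr⟩ := ih h2k
      have hdk : 2 ≤ d k := h2' k (Nat.lt_succ_self k)
      rw [monodromy_succ, mul_entries]
      set M := monodromy k d with hM
      set a := M 0 0; set b := M 0 1; set c := M 1 0; set e := M 1 1
      constructor
      · refine ⟨?_, ?_, ?_, ?_, ?_⟩ <;> simp [MonInv] <;> nlinarith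
      constructor
      · rw [← mul_entries, Matrix.det_mul, hdet]
        simp [Matrix.det_fin_two_of]
      · rintro ⟨j, hj, hj3⟩
        rw [Matrix.trace_fin_two_of]
        rcases Nat.lt_succ_iff_lt_or_eq.mp hj with hjk | rfl
        · have := htr ⟨j, hjk, hj3⟩
          have htrM : Matrix.trace M = a + e := by
            simp [Matrix.trace, Fin.sum_univ_two]
            rfl
          rw [htrM] at this
          nlinarith
        · nlinarith
  obtain ⟨_, hdet, htr⟩ := key n hn h2
  exact ⟨hdet, htr h3⟩
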